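/- arXiv:1512.08667 — 2 statements merged into one kernel-verified Lean document; each statement's English description precedes it below -/
import Mathlib

section
/- The function F(c) = (1 − 4c²)/(c² + (1 + c²)²/(1 − c²)) is strictly decreasing on [0, 1/2), takes values in (0, 1] there, and satisfies F(c*) = 1/4 for c* = √((23 − √337)/32). -/
/-- The limiting pinching ratio `F(c) = (1 − 4c²)/(c² + (1 + c²)²/(1 − c²))`. -/
noncomputable def pinchF (c : ℝ) : ℝ :=
  (1 - 4 * c ^ 2) / (c ^ 2 + (1 + c ^ 2) ^ 2 / (1 - c ^ 2))

lemma pinchF_eq (c : ℝ) (h : c ^ 2 < 1) :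
    pinchF c = (1 - 4 * c ^ 2) * (1 - c ^ 2) / (1 + 3 * c ^ 2) := by
  have h1 : (1 : ℝ) - c ^ 2 ≠ 0 := by linarith
  have h2 : (1 : ℝ) + 3 * c ^ 2 ≠ 0 := by nlinarith [sq_nonneg c]
  have h3 : c ^ 2 + (1 + c ^ 2) ^ 2 / (1 - c ^ 2) = (1 + 3 * c ^ 2) / (1 - c ^ 2) := by
    field_simp; ring
  rw [pinchF, h3]
  field_simp

/-- `F` is strictly decreasing on `[0,1/2)`, takes values in `(0,1]` there, and
`F(c*) = 1/4` for `c* = √((23 − √337)/32)`. -/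
theorem stmt3 :
    StrictAntiOn pinchF (Set.Ico 0 (1 / 2)) ∧
    (∀ c ∈ Set.Ico (0 : ℝ) (1 / 2), pinchF c ∈ Set.Ioc 0 1) ∧
    pinchF (Real.sqrt ((23 - Real.sqrt 337) / 32)) = 1 / 4 := by
  refine ⟨?_, ?_, ?_⟩
  · intro a ha b hb hab
    obtain ⟨ha0, ha1⟩ := ha
    obtain ⟨hb0, hb1⟩ := hb
    have ha2 : a ^ 2 < 1 := by nlinarith
    have hb2 : b ^ 2 < 1 := by nlinarith
    rw [pinchF_eq a ha2, pinchF_eq b hb2]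
    rw [div_lt_div_iff₀ (by nlinarith [sq_nonneg b]) (by nlinarith [sq_nonneg a])]
    have h4 : a ^ 2 < 1 / 4 := by nlinarith
    have h5 : b ^ 2 < 1 / 4 := by nlinarith
    have h6 : a ^ 2 < b ^ 2 := by nlinarith
    have key := mul_pos (sub_pos.2 h6)
      (show (0:ℝ) < 8 - 4 * a ^ 2 - 4 * b ^ 2 - 12 * a ^ 2 * b ^ 2 by
        nlinarith [mul_nonneg (sq_nonneg a) (sq_nonneg b)])
    nlinarith [key]
  · intro c hc
    obtain ⟨hc0, hc1⟩ := hc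
    have hc2 : c ^ 2 < 1 / 4 := by nlinarith
    have h2 : c ^ 2 < 1 := by linarith
    rw [pinchF_eq c h2]
    constructor
    · apply div_pos
      · nlinarith
      · nlinarith [sq_nonneg c]
    · rw [div_le_one (by nlinarith [sq_nonneg c])]
      nlinarith [sq_nonneg c, sq_nonneg (c^2)]
  · set s := Real.sqrt 337 with hs
    have hs0 : 0 ≤ s := Real.sqrt_nonneg _
    have hs2 : s ^ 2 = 337 := Real.sq_sqrt (by norm_num)
    have hs23 : s < 23 := by nlinarith
    have ht0 : (0 : ℝ) ≤ (23 - s) / 32 := by linarith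
    have hct : Real.sqrt ((23 - s) / 32) ^ 2 = (23 - s) / 32 := Real.sq_sqrt ht0
    have h1 : Real.sqrt ((23 - s) / 32) ^ 2 < 1 := by rw [hct]; linarith
    rw [pinchF_eq _ h1, hct]
    rw [div_eq_iff (by nlinarith)]
    linear_combination (1/256 : ℝ) * hs2
end

section
/- For every c with 0 ≤ c < √((23 − √337)/32), one has (1 − 4c²)/(c² + (1 + c²)²/(1 − c²)) > 1/4. -/
/-- For `0 ≤ c < √((23 − √337)/32)`, the pinching ratio exceeds `1/4`. -/
theorem stmt4 (c : ℝ) (h0 : 0 ≤ c) (h1 : c < Real.sqrt ((23 - Real.sqrt 337) / 32)) :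
    (1 - 4 * c ^ 2) / (c ^ 2 + (1 + c ^ 2) ^ 2 / (1 - c ^ 2)) > 1 / 4 := by
  set s := Real.sqrt 337 with hs
  have hs0 : 0 ≤ s := Real.sqrt_nonneg _
  have hs2 : s ^ 2 = 337 := Real.sq_sqrt (by norm_num)
  have hs19 : s < 19 := by nlinarith
  have hx : c ^ 2 < (23 - s) / 32 := by
    have := (Real.lt_sqrt h0).mp h1
    linarith
  set x := c ^ 2 with hxdef
  have hx0 : 0 ≤ x := sq_nonneg c
  have h1x : (0:ℝ) < 1 - x := by nlinarith
  have hkey : 16 * x ^ 2 - 23 * x + 3 > 0 := by nlinarith [sq_nonneg (23 - 32 * x - s)]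
  have hden : 0 < x + (1 + x) ^ 2 / (1 - x) := by positivity
  rw [gt_iff_lt, lt_div_iff₀ hden]
  have hexp : x + (1 + x) ^ 2 / (1 - x) = (1 + 3 * x) / (1 - x) := by
    field_simp; ring
  rw [hexp, mul_div_assoc', div_lt_iff₀ h1x]
  nlinarith
end
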